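/- Let V_1 = Z_p^{d_1}, V_2 = Z_p^{d_2}, and G = (V_1 × V_2) ⋊_{(ψ_1, ψ_2)} D_{2r}, where p is an odd prime, p ∤ r, r ≥ 3, and ψ_1, ψ_2 are irreducible F_p-representations of D_{2r}. If G admits a generating pair (ρ, τ) with |ρ| = 2p and |τ| = 2, then ψ_1 and ψ_2 are not isomorphic as representations. -/

import Mathlib

/-- The multiplicative group structure that `AddAut V` carried in the older Mathlib
(`e₁ * e₂ = e₂.trans e₁`); current Mathlib gives `AddAut V` an additive group structure instead. -/
instance addAutGroupOld {V : Type*} [Add V] : Group (AddAut V) where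
  mul g h := AddEquiv.trans h g
  one := AddEquiv.refl _
  inv := AddEquiv.symm
  mul_assoc _ _ _ := rfl
  one_mul _ := rfl
  mul_one _ := rfl
  inv_mul_cancel := AddEquiv.self_trans_symm

/-- The canonical homomorphism `AddAut V →* MulAut (Multiplicative V)`. -/
def addAutToMulAut {V : Type*} [AddGroup V] : AddAut V →* MulAut (Multiplicative V) :=
  MonoidHom.mk' (fun e => AddEquiv.toMultiplicative e) (fun e₁ e₂ => by ext x; rfl)

lemma aux_r_inv {n : ℕ} (a : ZMod n) : (DihedralGroup.r a)⁻¹ = DihedralGroup.r (-a) :=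
  inv_eq_of_mul_eq_one_left (by rw [DihedralGroup.r_mul_r, neg_add_cancel]; rfl)

lemma aux_sr_inv {n : ℕ} (a : ZMod n) : (DihedralGroup.sr a)⁻¹ = DihedralGroup.sr a :=
  inv_eq_of_mul_eq_one_left (by rw [DihedralGroup.sr_mul_sr, sub_self]; rfl)

lemma aux_r_pow {n : ℕ} (a : ZMod n) (m : ℕ) :
    (DihedralGroup.r a) ^ m = DihedralGroup.r (m • a) := by
  induction m with
  | zero => rw [pow_zero, zero_nsmul, DihedralGroup.one_def]
  | succ k ih => rw [pow_succ, ih, DihedralGroup.r_mul_r, succ_nsmul]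

lemma aux_r_zpow {n : ℕ} (a : ZMod n) (m : ℤ) :
    (DihedralGroup.r a) ^ m = DihedralGroup.r (m • a) := by
  cases m with
  | ofNat k => simpa using aux_r_pow a k
  | negSucc k =>
      rw [zpow_negSucc, aux_r_pow, aux_r_inv]
      rw [negSucc_zsmul]

lemma two_involutions_closure {Q : Type*} [Group Q] {x y : Q} (hx : x * x = 1) (hy : y * y = 1)
    {g : Q} (hg : g ∈ Subgroup.closure {x, y}) :
    ∃ k : ℤ, g = (x * y) ^ k ∨ g = x * (x * y) ^ k := by
  set z := x * y with hz
  have hxinv : x⁻¹ = x := inv_eq_of_mul_eq_one_left hx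
  have hyinv : y⁻¹ = y := inv_eq_of_mul_eq_one_left hy
  have h1 : x * z * x⁻¹ = z⁻¹ := by
    rw [hxinv, hz, mul_inv_rev, hxinv, hyinv, ← mul_assoc, hx, one_mul]
  have h2 : ∀ k : ℤ, x * z ^ k = z ^ (-k) * x := by
    intro k
    have := @conj_zpow _ _ k x z
    rw [h1, inv_zpow, ← zpow_neg] at this
    calc x * z ^ k = (x * z ^ k * x⁻¹) * x := by group
    _ = z ^ (-k) * x := by rw [this]
  refine Subgroup.closure_induction ?_ ?_ ?_ ?_ hg
  · rintro w (rfl | rfl)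
    · exact ⟨0, Or.inr (by simp)⟩
    · exact ⟨1, Or.inr (by rw [zpow_one, hz, ← mul_assoc, hx, one_mul])⟩
  · exact ⟨0, Or.inl (by simp)⟩
  · rintro a b _ _ ⟨k, (rfl | rfl)⟩ ⟨l, (rfl | rfl)⟩
    · exact ⟨k + l, Or.inl (by rw [zpow_add])⟩
    · refine ⟨l - k, Or.inr ?_⟩
      have h2' : z ^ k * x = x * z ^ (-k) := by
        have := h2 (-k); rw [neg_neg] at this; exact this.symm
      rw [← mul_assoc, h2', mul_assoc, ← zpow_add, neg_add_eq_sub]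
    · exact ⟨k + l, Or.inr (by rw [mul_assoc, ← zpow_add])⟩
    · refine ⟨l - k, Or.inl ?_⟩
      have h2' : z ^ k * x = x * z ^ (-k) := by
        have := h2 (-k); rw [neg_neg] at this; exact this.symm
      have e1 : x * z ^ k * (x * z ^ l) = x * ((z ^ k * x) * z ^ l) := by group
      rw [e1, h2', mul_assoc, ← zpow_add, neg_add_eq_sub, ← mul_assoc, hx, one_mul]
  · rintro a _ ⟨k, (rfl | rfl)⟩
    · exact ⟨-k, Or.inl (by rw [zpow_neg])⟩
    · refine ⟨k, Or.inr ?_⟩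
      rw [mul_inv_rev, hxinv, ← zpow_neg]
      exact (h2 k).symm

lemma central_rot_not_gen {n : ℕ} (hn : 3 ≤ n) {k : ZMod n} (hk : k + k = 0)
    {b : DihedralGroup n} (hgen : Subgroup.closure {DihedralGroup.r k, b} = ⊤) : False := by
  have : NeZero n := ⟨by omega⟩
  have hnegk : -k = k := by rw [neg_eq_iff_add_eq_zero, hk]
  have hcen : ∀ g : DihedralGroup n, DihedralGroup.r k * g = g * DihedralGroup.r k := by
    rintro (m | m)
    · rw [DihedralGroup.r_mul_r, DihedralGroup.r_mul_r, add_comm]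
    · rw [DihedralGroup.r_mul_sr, DihedralGroup.sr_mul_r, sub_eq_add_neg, hnegk]
  have hbcen : ∀ g : DihedralGroup n, b * g = g * b := by
    intro g
    have hle : Subgroup.closure {DihedralGroup.r k, b} ≤ Subgroup.centralizer {b} := by
      rw [Subgroup.closure_le]
      rintro w (rfl | rfl) <;> rw [SetLike.mem_coe, Subgroup.mem_centralizer_iff]
      · rintro h rfl; exact (hcen h).symm
      · rintro h rfl; rfl
    have : g ∈ Subgroup.centralizer {b} := hle (hgen ▸ Subgroup.mem_top g)
    exact Subgroup.mem_centralizer_iff.mp this b rfl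
  have hle : Subgroup.closure {DihedralGroup.r k, b} ≤ Subgroup.center _ := by
    rw [Subgroup.closure_le]
    rintro w (rfl | rfl) <;> rw [SetLike.mem_coe, Subgroup.mem_center_iff] <;> intro g
    · exact (hcen g).symm
    · exact (hbcen g).symm
  have hcomm : ∀ a g : DihedralGroup n, a * g = g * a := by
    intro a g
    have : a ∈ Subgroup.center _ := hle (hgen ▸ Subgroup.mem_top a)
    exact (Subgroup.mem_center_iff.mp this g).symm
  have h2 := hcomm (DihedralGroup.sr 0) (DihedralGroup.r 1)
  rw [DihedralGroup.sr_mul_r, DihedralGroup.r_mul_sr, zero_add, zero_sub] at h2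
  have h3 : (1 : ZMod n) = -1 := by
    injection h2
  have h4 : ((2 : ℕ) : ZMod n) = 0 := by
    push_cast
    linear_combination h3
  rw [ZMod.natCast_eq_zero_iff] at h4
  exact absurd (Nat.le_of_dvd (by norm_num) h4) (by omega)

lemma sdp_pow_right {N G : Type*} [Group N] [Group G] {φ : G →* MulAut N}
    (g : N ⋊[φ] G) (n : ℕ) : (g ^ n).right = g.right ^ n := by
  have := map_pow (SemidirectProduct.rightHom (φ := φ)) g n
  simpa [SemidirectProduct.rightHom] using this

lemma sdp_pow_left {N G : Type*} [CommGroup N] [Group G] {φ : G →* MulAut N}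
    (g : N ⋊[φ] G) (n : ℕ) :
    (g ^ n).left = ∏ k ∈ Finset.range n, φ (g.right ^ k) g.left := by
  induction n with
  | zero => simp
  | succ m ih =>
      rw [pow_succ, SemidirectProduct.mul_left, ih, sdp_pow_right, Finset.prod_range_succ]

lemma dihedral_refl_gen {n : ℕ} {i j : ZMod n}
    (hgen : Subgroup.closure {DihedralGroup.sr i, DihedralGroup.sr j} = ⊤) :
    ∃ m : ℤ, m • (j - i) = (1 : ZMod n) := by
  have aux_r_inv : ∀ a : ZMod n, (DihedralGroup.r a)⁻¹ = DihedralGroup.r (-a) :=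
    fun a => inv_eq_of_mul_eq_one_left (by rw [DihedralGroup.r_mul_r, neg_add_cancel]; rfl)
  have aux_sr_inv : ∀ a : ZMod n, (DihedralGroup.sr a)⁻¹ = DihedralGroup.sr a :=
    fun a => inv_eq_of_mul_eq_one_left (by rw [DihedralGroup.sr_mul_sr, sub_self]; rfl)
  set Z := AddSubgroup.zmultiples (j - i) with hZ
  set P : Subgroup (DihedralGroup n) :=
    { carrier := {g | ∃ m : ZMod n,
        (g = DihedralGroup.r m ∧ m ∈ Z) ∨ (g = DihedralGroup.sr m ∧ m - i ∈ Z)}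
      one_mem' := ⟨0, Or.inl ⟨DihedralGroup.one_def, zero_mem Z⟩⟩
      mul_mem' := by
        rintro a b ⟨m, (⟨rfl, hm⟩ | ⟨rfl, hm⟩)⟩ ⟨m', (⟨rfl, hm'⟩ | ⟨rfl, hm'⟩)⟩
        · exact ⟨m + m', Or.inl ⟨DihedralGroup.r_mul_r m m', add_mem hm hm'⟩⟩
        · refine ⟨m' - m, Or.inr ⟨DihedralGroup.r_mul_sr m m', ?_⟩⟩
          have : m' - m - i = (m' - i) - m := by ring
          rw [this]; exact sub_mem hm' hm
        · refine ⟨m + m', Or.inr ⟨DihedralGroup.sr_mul_r m m', ?_⟩⟩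
          have : m + m' - i = (m - i) + m' := by ring
          rw [this]; exact add_mem hm hm'
        · refine ⟨m' - m, Or.inl ⟨DihedralGroup.sr_mul_sr m m', ?_⟩⟩
          have : m' - m = (m' - i) - (m - i) := by ring
          rw [this]; exact sub_mem hm' hm
      inv_mem' := by
        rintro a ⟨m, (⟨rfl, hm⟩ | ⟨rfl, hm⟩)⟩
        · exact ⟨-m, Or.inl ⟨aux_r_inv m, neg_mem hm⟩⟩
        · exact ⟨m, Or.inr ⟨aux_sr_inv m, hm⟩⟩ } with hP
  have hle : Subgroup.closure {DihedralGroup.sr i, DihedralGroup.sr j} ≤ P := by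
    rw [Subgroup.closure_le]
    rintro w (rfl | rfl)
    · exact ⟨i, Or.inr ⟨rfl, by rw [sub_self]; exact zero_mem Z⟩⟩
    · exact ⟨j, Or.inr ⟨rfl, AddSubgroup.mem_zmultiples _⟩⟩
  have h1 : DihedralGroup.r 1 ∈ P := hle (hgen ▸ Subgroup.mem_top _)
  obtain ⟨m, (⟨he, hm⟩ | ⟨he, _⟩)⟩ := h1
  · obtain rfl : m = 1 := by injection he.symm
    exact AddSubgroup.mem_zmultiples_iff.mp hm
  · exact absurd he (by simp)

lemma final_contradiction {r : ℕ} (hr : 3 ≤ r)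
    {V₁ V₂ : Type} [AddCommGroup V₁] [AddCommGroup V₂]
    (ψ : DihedralGroup r →* AddAut (V₁ × V₂))
    (ρ τ : Multiplicative (V₁ × V₂) ⋊[addAutToMulAut.comp ψ] DihedralGroup r)
    (hgen : Subgroup.closure {ρ, τ} = ⊤)
    {i j : ZMod r} (hρr : ρ.right = DihedralGroup.sr i) (hτr : τ.right = DihedralGroup.sr j)
    (hδ : ∃ m : ℤ, m • (j - i) = (1 : ZMod r))
    (M : AddSubgroup (V₁ × V₂))
    (hMinv : ∀ g, ∀ x ∈ M, ψ g x ∈ M)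
    (hMv : Multiplicative.toAdd ((ρ * ρ).left) ∈ M)
    (hτ2 : τ * τ = 1)
    (hMγ : Multiplicative.toAdd (((ρ * τ) ^ r).left) ∈ M) :
    M = ⊤ := by
  set M' : Subgroup (Multiplicative (V₁ × V₂) ⋊[addAutToMulAut.comp ψ] DihedralGroup r) :=
    (AddSubgroup.toSubgroup M).map SemidirectProduct.inl with hM'
  have hmemM' : ∀ g : Multiplicative (V₁ × V₂) ⋊[addAutToMulAut.comp ψ] DihedralGroup r,
      g ∈ M' ↔ (Multiplicative.toAdd g.left ∈ M ∧ g.right = 1) := by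
    intro g
    constructor
    · rintro ⟨a, ha, rfl⟩
      exact ⟨ha, rfl⟩
    · rintro ⟨h1, h2⟩
      refine ⟨g.left, h1, ?_⟩
      refine SemidirectProduct.ext ?_ ?_
      · rfl
      · exact h2.symm
  haveI hnorm : M'.Normal := by
    constructor
    intro m hm g
    rw [hmemM'] at hm
    obtain ⟨h1, h2⟩ := hm
    have hmeq : m = SemidirectProduct.inl m.left := by
      refine SemidirectProduct.ext ?_ ?_
      · rfl
      · exact h2
    have key : g * m * g⁻¹ =
        SemidirectProduct.inl ((addAutToMulAut.comp ψ) g.right m.left) := by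
      conv_lhs => rw [hmeq, ← SemidirectProduct.inl_left_mul_inr_right g]
      have e1 : (SemidirectProduct.inl g.left * SemidirectProduct.inr g.right) *
            SemidirectProduct.inl m.left *
            (SemidirectProduct.inl g.left * SemidirectProduct.inr g.right)⁻¹
          = SemidirectProduct.inl g.left *
            (SemidirectProduct.inr g.right * SemidirectProduct.inl m.left *
              (SemidirectProduct.inr g.right)⁻¹) *
            (SemidirectProduct.inl (φ := addAutToMulAut.comp ψ) g.left)⁻¹ := by
        group
      rw [e1, ← map_inv SemidirectProduct.inr, ← SemidirectProduct.inl_aut,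
        ← map_inv SemidirectProduct.inl, ← map_mul, ← map_mul]
      congr 1
      rw [mul_comm g.left, mul_inv_cancel_right]
    rw [key]
    exact (hmemM' _).mpr ⟨hMinv _ _ h1, rfl⟩
  set π0 := QuotientGroup.mk' M' with hπ0
  have hkerπ : M' ≤ SemidirectProduct.rightHom.ker := by
    intro g hg
    rw [MonoidHom.mem_ker, SemidirectProduct.rightHom_eq_right]
    exact ((hmemM' g).mp hg).2
  set π' : _ →* DihedralGroup r := QuotientGroup.lift M' SemidirectProduct.rightHom hkerπ
    with hπ'
  set x := π0 ρ with hx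
  set y := π0 τ with hy
  set z := x * y with hz
  have hρ2 : ρ * ρ ∈ M' := by
    refine (hmemM' _).mpr ⟨hMv, ?_⟩
    rw [SemidirectProduct.mul_right, hρr, DihedralGroup.sr_mul_sr, sub_self]
    rfl
  have hx2 : x * x = 1 := by
    rw [hx, ← map_mul]
    exact (QuotientGroup.eq_one_iff _).mpr hρ2
  have hy2 : y * y = 1 := by
    rw [hy, ← map_mul, hτ2, map_one]
  have hρτr : (ρ * τ).right = DihedralGroup.r (j - i) := by
    rw [SemidirectProduct.mul_right, hρr, hτr, DihedralGroup.sr_mul_sr]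
  have hρτpow : (ρ * τ) ^ r ∈ M' := by
    refine (hmemM' _).mpr ⟨hMγ, ?_⟩
    rw [sdp_pow_right, hρτr, aux_r_pow]
    have : (r : ℕ) • (j - i) = 0 := by
      rw [nsmul_eq_mul, ZMod.natCast_self, zero_mul]
    rw [this]
    rfl
  have hzr : z ^ r = 1 := by
    rw [hz, hx, hy, ← map_mul, ← map_pow]
    exact (QuotientGroup.eq_one_iff _).mpr hρτpow
  have hclQ : Subgroup.closure {x, y} = ⊤ := by
    have h1 := MonoidHom.map_closure π0 {ρ, τ}
    rw [hgen, Set.image_pair] at h1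
    rw [hx, hy, ← h1]
    exact Subgroup.map_top_of_surjective π0 (QuotientGroup.mk'_surjective M')
  have hπx : π' x = DihedralGroup.sr i := by
    rw [← hρr]; rfl
  have hπy : π' y = DihedralGroup.sr j := by
    rw [← hτr]; rfl
  have hπz : π' z = DihedralGroup.r (j - i) := by
    rw [hz, map_mul, hπx, hπy, DihedralGroup.sr_mul_sr]
  rw [AddSubgroup.eq_top_iff']
  intro t
  set g : _ := π0 (SemidirectProduct.inl (Multiplicative.ofAdd t)) with hg
  obtain ⟨k, hk | hk⟩ := two_involutions_closure hx2 hy2 (hclQ ▸ Subgroup.mem_top g)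
  · have hπg : π' g = 1 := by
      rw [hg]
      show SemidirectProduct.rightHom
        (SemidirectProduct.inl (φ := addAutToMulAut.comp ψ) (Multiplicative.ofAdd t)) = 1
      exact SemidirectProduct.rightHom_inl _
    rw [hk, map_zpow, hπz, aux_r_zpow] at hπg
    have hkδ : k • (j - i) = 0 := by
      have : DihedralGroup.r (k • (j - i)) = DihedralGroup.r (0 : ZMod r) := hπg
      injection this
    obtain ⟨m, hm⟩ := hδ
    have hcast : ((k : ℤ) : ZMod r) = 0 := by
      have h1 : k • (m • (j - i)) = 0 := by
        rw [smul_comm, hkδ, smul_zero]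
      rw [hm] at h1
      rwa [zsmul_eq_mul, mul_one] at h1
    have hdvd : (r : ℤ) ∣ k := (ZMod.intCast_zmod_eq_zero_iff_dvd k r).mp hcast
    have hzk : z ^ k = 1 := by
      rw [← orderOf_dvd_iff_zpow_eq_one]
      exact dvd_trans (Int.natCast_dvd_natCast.mpr (orderOf_dvd_of_pow_eq_one hzr)) hdvd
    rw [hzk] at hk
    have : SemidirectProduct.inl (Multiplicative.ofAdd t) ∈ M' :=
      (QuotientGroup.eq_one_iff _).mp hk
    exact ((hmemM' _).mp this).1
  · exfalso
    have hπg : π' g = 1 := by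
      rw [hg]
      show SemidirectProduct.rightHom
        (SemidirectProduct.inl (φ := addAutToMulAut.comp ψ) (Multiplicative.ofAdd t)) = 1
      exact SemidirectProduct.rightHom_inl _
    rw [hk, map_mul, map_zpow, hπx, hπz, aux_r_zpow, DihedralGroup.sr_mul_r] at hπg
    rw [DihedralGroup.one_def] at hπg
    exact absurd hπg (by intro h; cases h)

/-- Let `G = (V_1 × V_2) ⋊ D_{2r}` where `D_{2r}` acts componentwise via irreducible
representations `ψ_1, ψ_2` (`p` odd prime, `p ∤ r`, `r ≥ 3`). If `G` admits a generating
pair `(ρ, τ)` with `|ρ| = 2p` and `|τ| = 2`, then `ψ_1 ≇ ψ_2`. -/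
theorem stmt_16 (p r : ℕ) [Fact p.Prime] (hp : Odd p) (hr : 3 ≤ r) (hpr : ¬ p ∣ r)
    (V₁ V₂ : Type) [AddCommGroup V₁] [AddCommGroup V₂] [Finite V₁] [Finite V₂]
    [Nontrivial V₁] [Nontrivial V₂]
    (hV₁ : ∀ v : V₁, p • v = 0) (hV₂ : ∀ v : V₂, p • v = 0)
    (ψ : DihedralGroup r →* AddAut (V₁ × V₂))
    (hc₁ : ∀ g (v : V₁), (ψ g (v, (0 : V₂))).2 = 0)
    (hc₂ : ∀ g (w : V₂), (ψ g ((0 : V₁), w)).1 = 0)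
    (hirr₁ : ∀ W : AddSubgroup V₁,
      (∀ g, ∀ v ∈ W, (ψ g (v, (0 : V₂))).1 ∈ W) → W = ⊥ ∨ W = ⊤)
    (hirr₂ : ∀ W : AddSubgroup V₂,
      (∀ g, ∀ w ∈ W, (ψ g ((0 : V₁), w)).2 ∈ W) → W = ⊥ ∨ W = ⊤)
    (ρ τ : Multiplicative (V₁ × V₂) ⋊[addAutToMulAut.comp ψ] DihedralGroup r)
    (hgen : Subgroup.closure {ρ, τ} = ⊤)
    (hρ : orderOf ρ = 2 * p) (hτ : orderOf τ = 2) :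
    ¬ ∃ e : V₁ ≃+ V₂, ∀ g v, e ((ψ g (v, (0 : V₂))).1) = (ψ g ((0 : V₁), e v)).2 := by
  rintro ⟨e, he⟩
  haveI : NeZero r := ⟨by omega⟩
  haveI : NeZero p := ⟨(Fact.out : p.Prime).pos.ne'⟩
  have hp2 : 2 ≤ p := (Fact.out : p.Prime).two_le
  -- the two component actions
  set act : DihedralGroup r → V₁ → V₁ := fun g x => (ψ g (x, 0)).1 with hact
  set act₂ : DihedralGroup r → V₂ → V₂ := fun g y => (ψ g (0, y)).2 with hact2
  have hcomp : ∀ g (x : V₁) (y : V₂), ψ g (x, y) = (act g x, act₂ g y) := by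
    intro g x y
    have h0 : ψ g (x, y) = ψ g (x, 0) + ψ g (0, y) := by
      rw [← map_add]
      norm_num
    rw [h0]
    have h1 := hc₁ g x
    have h2 := hc₂ g y
    ext
    · show (ψ g (x, 0)).1 + (ψ g (0, y)).1 = act g x
      rw [h2, add_zero]
    · show (ψ g (x, 0)).2 + (ψ g (0, y)).2 = act₂ g y
      rw [h1, zero_add]
  have act_add : ∀ g (x x' : V₁), act g (x + x') = act g x + act g x' := by
    intro g x x'
    show (ψ g (x + x', 0)).1 = (ψ g (x, 0)).1 + (ψ g (x', 0)).1
    have : ((x + x' : V₁), (0 : V₂)) = (x, (0:V₂)) + (x', (0:V₂)) := by norm_num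
    rw [this, map_add]
    rfl
  have act_zero : ∀ g, act g (0 : V₁) = 0 := by
    intro g
    show (ψ g ((0 : V₁), (0 : V₂))).1 = 0
    have : ((0 : V₁), (0 : V₂)) = (0 : V₁ × V₂) := rfl
    rw [this, map_zero]
    rfl
  have act2_zero : ∀ g, act₂ g (0 : V₂) = 0 := by
    intro g
    show (ψ g ((0 : V₁), (0 : V₂))).2 = 0
    have : ((0 : V₁), (0 : V₂)) = (0 : V₁ × V₂) := rfl
    rw [this, map_zero]
    rfl
  have act_mul : ∀ g h (x : V₁), act (g * h) x = act g (act h x) := by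
    intro g h x
    show (ψ (g * h) (x, 0)).1 = act g ((ψ h (x, 0)).1)
    rw [map_mul]
    have : ψ h (x, 0) = (act h x, 0) := by
      rw [show ((x : V₁), (0 : V₂)) = (x, (0:V₂)) from rfl, hcomp, act2_zero]
    show (ψ g (ψ h (x, 0))).1 = act g ((ψ h (x, 0)).1)
    rw [this, hcomp]
  have act_one : ∀ x : V₁, act 1 x = x := by
    intro x
    show (ψ 1 (x, 0)).1 = x
    rw [map_one]
    rfl
  have hinter : ∀ g x, e (act g x) = act₂ g (e x) := he
  have hinter' : ∀ g (y : V₂), act g (e.symm y) = e.symm (act₂ g y) := by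
    intro g y
    apply e.injective
    rw [hinter g (e.symm y), AddEquiv.apply_symm_apply, AddEquiv.apply_symm_apply]
  -- D-part of generators: both are reflections
  have hDgen : Subgroup.closure {ρ.right, τ.right} = ⊤ := by
    have h1 := MonoidHom.map_closure (SemidirectProduct.rightHom) {ρ, τ}
    rw [hgen, Set.image_pair] at h1
    rw [show SemidirectProduct.rightHom ρ = ρ.right from rfl,
      show SemidirectProduct.rightHom τ = τ.right from rfl] at h1
    rw [← h1]
    exact Subgroup.map_top_of_surjective _ SemidirectProduct.rightHom_surjective
  have hτ2eq : τ * τ = 1 := by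
    have := pow_orderOf_eq_one τ
    rwa [hτ, pow_two] at this
  obtain ⟨i, hd1⟩ : ∃ i, ρ.right = DihedralGroup.sr i := by
    rcases hcase : ρ.right with k | i
    · exfalso
      have ho1 : orderOf (ρ.right) ∣ 2 * p := by
        rw [← hρ]
        exact orderOf_map_dvd SemidirectProduct.rightHom ρ
      have ho2 : orderOf (ρ.right) ∣ r := by
        apply orderOf_dvd_of_pow_eq_one
        rw [hcase, aux_r_pow, nsmul_eq_mul, ZMod.natCast_self, zero_mul]
        rfl
      have hop : ¬ p ∣ orderOf ρ.right := fun hpd => hpr (hpd.trans ho2)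
      have hcop : Nat.Coprime (orderOf ρ.right) p :=
        Nat.coprime_comm.mp ((Fact.out : p.Prime).coprime_iff_not_dvd.mpr hop)
      have ho3 : orderOf ρ.right ∣ 2 := hcop.dvd_of_dvd_mul_right ho1
      have h2 : ρ.right ^ 2 = 1 := orderOf_dvd_iff_pow_eq_one.mp ho3
      rw [hcase, aux_r_pow, DihedralGroup.one_def] at h2
      have hk2 : k + k = 0 := by
        have := h2
        injection this with h'
        rwa [two_nsmul] at h'
      refine central_rot_not_gen hr hk2 (b := τ.right) ?_
      rw [← hcase]
      exact hDgen
    · exact ⟨i, rfl⟩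
  obtain ⟨j, hd2⟩ : ∃ j, τ.right = DihedralGroup.sr j := by
    rcases hcase : τ.right with k | j
    · exfalso
      have h2 : τ.right * τ.right = 1 := by
        rw [show τ.right * τ.right = (τ * τ).right from rfl, hτ2eq]
        rfl
      rw [hcase, DihedralGroup.r_mul_r, DihedralGroup.one_def] at h2
      have hk2 : k + k = 0 := by injection h2
      refine central_rot_not_gen hr hk2 (b := ρ.right) ?_
      rw [← hcase, Set.pair_comm]
      exact hDgen
    · exact ⟨j, rfl⟩
  have hδgen : ∃ m : ℤ, m • (j - i) = (1 : ZMod r) := by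
    apply dihedral_refl_gen
    rw [← hd1, ← hd2]
    exact hDgen
  -- relator values
  set u := Multiplicative.toAdd ρ.left with hu
  set v := u + ψ (DihedralGroup.sr i) u with hv
  have eq1 : Multiplicative.toAdd ((ρ * ρ).left) = v := by
    show Multiplicative.toAdd (ρ.left * (addAutToMulAut.comp ψ) ρ.right ρ.left) = v
    rw [hd1]
    rfl
  have hvfix : ψ (DihedralGroup.sr i) v = v := by
    have hh : ψ (DihedralGroup.sr i) * ψ (DihedralGroup.sr i) = 1 := by
      rw [← map_mul, DihedralGroup.sr_mul_sr, sub_self, ← DihedralGroup.one_def, map_one]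
    have h2 : ψ (DihedralGroup.sr i) (ψ (DihedralGroup.sr i) u) = u := by
      show (ψ (DihedralGroup.sr i) * ψ (DihedralGroup.sr i)) u = u
      rw [hh]
      rfl
    rw [hv, map_add, h2, add_comm]
  have hvne : v ≠ 0 := by
    intro h0
    have hρ2 : ρ * ρ = 1 := by
      refine SemidirectProduct.ext ?_ ?_
      · show (ρ * ρ).left = 1
        have : Multiplicative.toAdd ((ρ * ρ).left) = Multiplicative.toAdd (1 : Multiplicative (V₁ × V₂)) := by
          rw [eq1, h0]
          rfl
        exact Multiplicative.toAdd.injective this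
      · show (ρ * ρ).right = 1
        rw [show (ρ * ρ).right = ρ.right * ρ.right from rfl, hd1,
          DihedralGroup.sr_mul_sr, sub_self]
        rfl
    have : orderOf ρ ∣ 2 := orderOf_dvd_of_pow_eq_one (by rwa [pow_two])
    rw [hρ] at this
    have := Nat.le_of_dvd (by norm_num) this
    omega
  set w := Multiplicative.toAdd τ.left with hw
  have hwrel : w + ψ (DihedralGroup.sr j) w = 0 := by
    have h1 : Multiplicative.toAdd ((τ * τ).left) = w + ψ τ.right w := rfl
    rw [hτ2eq, hd2] at h1
    exact h1.symm
  set m_vec := u + ψ (DihedralGroup.sr i) w with hm_vec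
  set δ := j - i with hδ
  set γ := ∑ k ∈ Finset.range r, ψ ((DihedralGroup.r δ) ^ k) m_vec with hγ
  have eq2 : Multiplicative.toAdd (((ρ * τ) ^ r).left) = γ := by
    have h1 := sdp_pow_left (ρ * τ) r
    have h2 : (ρ * τ).right = DihedralGroup.r δ := by
      rw [show (ρ * τ).right = ρ.right * τ.right from rfl, hd1, hd2,
        DihedralGroup.sr_mul_sr, hδ]
    have h3 : Multiplicative.toAdd ((ρ * τ).left) = m_vec := by
      show Multiplicative.toAdd (ρ.left * (addAutToMulAut.comp ψ) ρ.right τ.left) = m_vec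
      rw [hd1]
      rfl
    rw [h1, toAdd_prod]
    refine Finset.sum_congr rfl fun k _ => ?_
    show ψ ((ρ * τ).right ^ k) (Multiplicative.toAdd ((ρ * τ).left)) =
      ψ ((DihedralGroup.r δ) ^ k) m_vec
    rw [h2, h3]
  -- the fixed subgroup of the generating rotation
  have act_neg : ∀ g (x : V₁), act g (-x) = - act g x := by
    intro g x
    have h := act_add g (-x) x
    rw [neg_add_cancel, act_zero] at h
    exact eq_neg_of_add_eq_zero_left h.symm
  have act2_add : ∀ g (y y' : V₂), act₂ g (y + y') = act₂ g y + act₂ g y' := by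
    intro g y y'
    show (ψ g (0, y + y')).2 = (ψ g (0, y)).2 + (ψ g (0, y')).2
    have h0 : ((0 : V₁), y + y') = ((0:V₁), y) + ((0:V₁), y') := by norm_num
    rw [h0, map_add]
    rfl
  obtain ⟨M, hMinv, hMne, hMv, hMγ⟩ : ∃ M : AddSubgroup (V₁ × V₂),
      (∀ g, ∀ x ∈ M, ψ g x ∈ M) ∧ M ≠ ⊤ ∧ v ∈ M ∧ γ ∈ M := by
    set Wc : AddSubgroup V₁ :=
      { carrier := {x | act (DihedralGroup.r δ) x = x}
        zero_mem' := act_zero _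
        add_mem' := by
          intro a b ha hb
          show act _ (a + b) = a + b
          rw [act_add]
          rw [show act (DihedralGroup.r δ) a = a from ha,
            show act (DihedralGroup.r δ) b = b from hb]
        neg_mem' := by
          intro a ha
          show act _ (-a) = -a
          rw [act_neg, show act (DihedralGroup.r δ) a = a from ha] } with hWcdef
    have hWcmem : ∀ x : V₁, x ∈ Wc ↔ act (DihedralGroup.r δ) x = x := fun x => Iff.rfl
    have hWcinv : ∀ g, ∀ x ∈ Wc, (ψ g (x, (0:V₂))).1 ∈ Wc := by
      rintro (a | a) x hx <;> rw [hWcmem] at hx <;> rw [hWcmem]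
      · show act (DihedralGroup.r δ) (act (DihedralGroup.r a) x) = act (DihedralGroup.r a) x
        rw [← act_mul, DihedralGroup.r_mul_r, add_comm, ← DihedralGroup.r_mul_r, act_mul, hx]
      · show act (DihedralGroup.r δ) (act (DihedralGroup.sr a) x) = act (DihedralGroup.sr a) x
        have hxneg : act (DihedralGroup.r (-δ)) x = x := by
          conv_lhs => rw [← hx]
          rw [← act_mul, DihedralGroup.r_mul_r, neg_add_cancel, ← DihedralGroup.one_def,
            act_one]
        have hprod : DihedralGroup.r δ * DihedralGroup.sr a =
            DihedralGroup.sr a * DihedralGroup.r (-δ) := by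
          rw [DihedralGroup.r_mul_sr, DihedralGroup.sr_mul_r]
          congr 1
          ring
        rw [← act_mul, hprod, act_mul, hxneg]
    rcases hirr₁ Wc hWcinv with hWbot | hWtop
    · -- Case I : the rotation acts without nonzero fixed points
      have hWc0 : ∀ x : V₁, act (DihedralGroup.r δ) x = x → x = 0 := by
        intro x hx
        have : x ∈ Wc := (hWcmem x).mpr hx
        rw [hWbot, AddSubgroup.mem_bot] at this
        exact this
      have hγfix : ψ (DihedralGroup.r δ) γ = γ := by
        rw [hγ, map_sum]
        have hterm : ∀ k, ψ (DihedralGroup.r δ) (ψ ((DihedralGroup.r δ) ^ k) m_vec) =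
            ψ ((DihedralGroup.r δ) ^ (k + 1)) m_vec := by
          intro k
          show (ψ (DihedralGroup.r δ) * ψ ((DihedralGroup.r δ) ^ k)) m_vec = _
          rw [← map_mul, ← pow_succ']
        rw [Finset.sum_congr rfl fun k _ => hterm k]
        set f : ℕ → V₁ × V₂ := fun k => ψ ((DihedralGroup.r δ) ^ k) m_vec with hf
        have hfr : f r = f 0 := by
          rw [hf]
          show ψ ((DihedralGroup.r δ) ^ r) m_vec = ψ ((DihedralGroup.r δ) ^ 0) m_vec
          rw [pow_zero, aux_r_pow, nsmul_eq_mul, ZMod.natCast_self, zero_mul]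
          rfl
        have h1 := Finset.sum_range_succ' f r
        have h2 := Finset.sum_range_succ f r
        rw [h2, hfr] at h1
        exact add_right_cancel h1.symm
      have h5 : ψ (DihedralGroup.r δ) (γ.1, γ.2) = (γ.1, γ.2) := by
        rw [Prod.mk.eta]
        exact hγfix
      rw [hcomp] at h5
      injection h5 with h51 h52
      have hγ1 : γ.1 = 0 := hWc0 _ h51
      have hγ2 : γ.2 = 0 := by
        have h6 : act (DihedralGroup.r δ) (e.symm γ.2) = e.symm γ.2 := by
          rw [hinter', h52]
        have h7 := hWc0 _ h6
        have := congrArg e h7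
        rwa [AddEquiv.apply_symm_apply, map_zero] at this
      have hγ0 : γ = 0 := by
        rw [← Prod.mk.eta (p := γ), hγ1, hγ2]
        rfl
      by_cases hv1 : v.1 = 0
      · refine ⟨(⊥ : AddSubgroup V₁).prod ⊤, ?_, ?_, ?_, ?_⟩
        · intro g x hx
          rw [AddSubgroup.mem_prod] at hx ⊢
          obtain ⟨h1, -⟩ := hx
          rw [AddSubgroup.mem_bot] at h1
          refine ⟨?_, trivial⟩
          rw [AddSubgroup.mem_bot]
          have hx0 : x = (0, x.2) := by rw [← h1]
          rw [hx0, hcomp]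
          exact act_zero g
        · intro htop
          obtain ⟨x₀, hx₀⟩ := exists_ne (0 : V₁)
          have : ((x₀, (0:V₂)) : V₁ × V₂) ∈ (⊥ : AddSubgroup V₁).prod ⊤ := by
            rw [htop]; trivial
          rw [AddSubgroup.mem_prod, AddSubgroup.mem_bot] at this
          exact hx₀ this.1
        · exact AddSubgroup.mem_prod.mpr ⟨by rw [AddSubgroup.mem_bot]; exact hv1, trivial⟩
        · rw [hγ0]
          exact zero_mem _
      · by_cases hv2 : v.2 = 0
        · refine ⟨(⊤ : AddSubgroup V₁).prod ⊥, ?_, ?_, ?_, ?_⟩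
          · intro g x hx
            rw [AddSubgroup.mem_prod] at hx ⊢
            obtain ⟨-, h2⟩ := hx
            rw [AddSubgroup.mem_bot] at h2
            refine ⟨trivial, ?_⟩
            rw [AddSubgroup.mem_bot]
            have hx0 : x = (x.1, 0) := by rw [← h2]
            rw [hx0, hcomp]
            exact act2_zero g
          · intro htop
            obtain ⟨y₀, hy₀⟩ := exists_ne (0 : V₂)
            have : (((0:V₁), y₀) : V₁ × V₂) ∈ (⊤ : AddSubgroup V₁).prod ⊥ := by
              rw [htop]; trivial
            rw [AddSubgroup.mem_prod, AddSubgroup.mem_bot] at this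
            exact hy₀ this.2
          · exact AddSubgroup.mem_prod.mpr ⟨trivial, by rw [AddSubgroup.mem_bot]; exact hv2⟩
          · rw [hγ0]
            exact zero_mem _
        · -- CRUX: both components of v are nonzero
          have hv12 : ψ (DihedralGroup.sr i) (v.1, v.2) = (v.1, v.2) := by
            rw [Prod.mk.eta]
            exact hvfix
          rw [hcomp] at hv12
          injection hv12 with hfix1 hfix2
          have hw0ne : e.symm v.2 ≠ 0 := by
            intro h0
            apply hv2
            have := congrArg e h0
            rwa [AddEquiv.apply_symm_apply, map_zero] at this
          have hfixw : act (DihedralGroup.sr i) (e.symm v.2) = e.symm v.2 := by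
            rw [hinter', hfix2]
          -- orbit closure of v.1 is everything
          set N₁ : AddSubgroup V₁ :=
            AddSubgroup.closure (Set.range (fun m : ZMod r => act (DihedralGroup.r m) v.1))
            with hN₁
          have hN₁inv : ∀ g, ∀ x ∈ N₁, (ψ g (x, (0:V₂))).1 ∈ N₁ := by
            intro g x hx
            show act g x ∈ N₁
            refine AddSubgroup.closure_induction ?_ ?_ ?_ ?_ hx
            · rintro y ⟨m, rfl⟩
              rcases g with a | a
              · refine AddSubgroup.subset_closure ⟨a + m, ?_⟩
                rw [← act_mul, DihedralGroup.r_mul_r]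
              · have h1 : DihedralGroup.sr a * DihedralGroup.r m =
                    DihedralGroup.r (i - a - m) * DihedralGroup.sr i := by
                  rw [DihedralGroup.sr_mul_r, DihedralGroup.r_mul_sr]
                  congr 1
                  ring
                refine AddSubgroup.subset_closure ⟨i - a - m, ?_⟩
                rw [← act_mul, h1, act_mul, hfix1]
            · rw [act_zero]
              exact zero_mem _
            · intro y y' _ _ hy hy'
              rw [act_add]
              exact add_mem hy hy'
            · intro y _ hy
              rw [act_neg]
              exact neg_mem hy
          have hv1mem : v.1 ∈ N₁ := by
            refine AddSubgroup.subset_closure ⟨0, ?_⟩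
            show act (DihedralGroup.r 0) v.1 = v.1
            rw [← DihedralGroup.one_def, act_one]
          have hN₁top : N₁ = ⊤ := by
            rcases hirr₁ N₁ hN₁inv with h | h
            · exfalso
              rw [h, AddSubgroup.mem_bot] at hv1mem
              exact hv1 hv1mem
            · exact h
          -- finite sums of the orbit
          have act_sum_smul : ∀ g (c : ZMod r → ℤ) (t : ZMod r → V₁),
              act g (∑ k : ZMod r, c k • t k) = ∑ k : ZMod r, c k • act g (t k) := by
            intro g c t
            have h1 : act g (∑ k : ZMod r, c k • t k)
                = AddMonoidHom.mk' (act g) (act_add g) (∑ k : ZMod r, c k • t k) := rfl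
            rw [h1, map_sum]
            refine Finset.sum_congr rfl fun k _ => ?_
            rw [map_zsmul]
            rfl
          set F : (ZMod r → ℤ) → V₁ :=
            fun n => ∑ m : ZMod r, n m • act (DihedralGroup.r m) v.1 with hF
          set FW : (ZMod r → ℤ) → V₁ :=
            fun n => ∑ m : ZMod r, n m • act (DihedralGroup.r m) (e.symm v.2) with hFW
          have hFadd : ∀ n n', F (n + n') = F n + F n' := by
            intro n n'
            rw [hF]
            simp only [Pi.add_apply, add_smul]
            rw [Finset.sum_add_distrib]
          have hFWadd : ∀ n n', FW (n + n') = FW n + FW n' := by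
            intro n n'
            rw [hFW]
            simp only [Pi.add_apply, add_smul]
            rw [Finset.sum_add_distrib]
          have hFneg : ∀ n, F (-n) = - F n := by
            intro n
            rw [hF]
            simp only [Pi.neg_apply, neg_smul]
            rw [Finset.sum_neg_distrib]
          have hFWneg : ∀ n, FW (-n) = - FW n := by
            intro n
            rw [hFW]
            simp only [Pi.neg_apply, neg_smul]
            rw [Finset.sum_neg_distrib]
          have hsingle : ∀ (y : V₁) (m₀ : ZMod r),
              (∑ m : ZMod r, (Pi.single m₀ 1 : ZMod r → ℤ) m • act (DihedralGroup.r m) y)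
              = act (DihedralGroup.r m₀) y := by
            intro y m₀
            rw [Finset.sum_eq_single m₀]
            · rw [Pi.single_eq_same, one_smul]
            · intro b _ hb
              rw [Pi.single_eq_of_ne hb, zero_smul]
            · intro hm
              exact absurd (Finset.mem_univ m₀) hm
          have hrange : ∀ x : V₁, ∃ n, F n = x := by
            intro x
            have hx : x ∈ N₁ := by
              rw [hN₁top]
              trivial
            refine AddSubgroup.closure_induction ?_ ?_ ?_ ?_ hx
            · rintro y ⟨m, rfl⟩
              exact ⟨Pi.single m 1, hsingle v.1 m⟩
            · exact ⟨0, by rw [hF]; simp⟩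
            · rintro y y' _ _ ⟨n, rfl⟩ ⟨n', rfl⟩
              exact ⟨n + n', hFadd n n'⟩
            · rintro y _ ⟨n, rfl⟩
              exact ⟨-n, hFneg n⟩
          obtain ⟨b, hb⟩ := hrange (e.symm v.2)
          have hrotcomm : ∀ (m k : ZMod r) (x : V₁),
              act (DihedralGroup.r m) (act (DihedralGroup.r k) x)
              = act (DihedralGroup.r k) (act (DihedralGroup.r m) x) := by
            intro m k x
            rw [← act_mul, ← act_mul, DihedralGroup.r_mul_r, DihedralGroup.r_mul_r, add_comm]
          have hL0 : ∀ n, F n = 0 → FW n = 0 := by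
            intro n hn
            have step1 : FW n = ∑ m : ZMod r, ∑ k : ZMod r,
                (n m * b k) • act (DihedralGroup.r m) (act (DihedralGroup.r k) v.1) := by
              rw [hFW]
              refine Finset.sum_congr rfl fun m _ => ?_
              rw [← hb, hF, act_sum_smul, Finset.smul_sum]
              refine Finset.sum_congr rfl fun k _ => ?_
              rw [smul_smul]
            have step2 : FW n = ∑ k : ZMod r, b k •
                act (DihedralGroup.r k) (∑ m : ZMod r, n m • act (DihedralGroup.r m) v.1) := by
              rw [step1, Finset.sum_comm]
              refine Finset.sum_congr rfl fun k _ => ?_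
              rw [act_sum_smul, Finset.smul_sum]
              refine Finset.sum_congr rfl fun m _ => ?_
              rw [smul_smul, mul_comm, hrotcomm]
            rw [step2, show (∑ m : ZMod r, n m • act (DihedralGroup.r m) v.1) = F n from rfl, hn]
            simp only [act_zero, smul_zero]
            exact Finset.sum_const_zero
          have hL : ∀ n n', F n = F n' → FW n = FW n' := by
            intro n n' h
            have h1 : F (n + -n') = 0 := by
              rw [hFadd, hFneg, h, add_neg_cancel]
            have h2 := hL0 _ h1
            rw [hFWadd, hFWneg] at h2
            have h3 : FW n - FW n' = 0 := by
              rw [sub_eq_add_neg]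
              exact h2
            exact sub_eq_zero.mp h3
          -- define the intertwiner
          set φ₀ : V₁ → V₁ := fun x => FW (hrange x).choose with hφ₀
          have hφeq : ∀ n (x : V₁), F n = x → φ₀ x = FW n := by
            intro n x h
            exact hL _ n (by rw [(hrange x).choose_spec, h])
          have hφzero : φ₀ (0 : V₁) = 0 := by
            rw [hφeq 0 0 (by rw [hF]; simp)]
            rw [hFW]
            simp
          have hφadd : ∀ x x' : V₁, φ₀ (x + x') = φ₀ x + φ₀ x' := by
            intro x x'
            have h1 : F ((hrange x).choose + (hrange x').choose) = x + x' := by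
              rw [hFadd, (hrange x).choose_spec, (hrange x').choose_spec]
            rw [hφeq _ _ h1, hFWadd]
          have hφneg : ∀ x : V₁, φ₀ (-x) = - φ₀ x := by
            intro x
            have h1 : F (-(hrange x).choose) = -x := by
              rw [hFneg, (hrange x).choose_spec]
            rw [hφeq _ _ h1, hFWneg]
          have hφv : φ₀ v.1 = e.symm v.2 := by
            have h1 : F (Pi.single 0 1) = v.1 := by
              show (∑ m : ZMod r, (Pi.single (0 : ZMod r) 1 : ZMod r → ℤ) m •
                act (DihedralGroup.r m) v.1) = v.1
              rw [hsingle v.1 0]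
              show act (DihedralGroup.r 0) v.1 = v.1
              rw [← DihedralGroup.one_def, act_one]
            have h2 : FW (Pi.single 0 1) = e.symm v.2 := by
              show (∑ m : ZMod r, (Pi.single (0 : ZMod r) 1 : ZMod r → ℤ) m •
                act (DihedralGroup.r m) (e.symm v.2)) = e.symm v.2
              rw [hsingle (e.symm v.2) 0]
              show act (DihedralGroup.r 0) (e.symm v.2) = e.symm v.2
              rw [← DihedralGroup.one_def, act_one]
            rw [hφeq _ _ h1, h2]
          -- commutation with the action
          have hshift : ∀ (a : ZMod r) (n : ZMod r → ℤ) (y : V₁),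
              (∑ m : ZMod r, n (m - a) • act (DihedralGroup.r m) y)
              = act (DihedralGroup.r a) (∑ m' : ZMod r, n m' • act (DihedralGroup.r m') y) := by
            intro a n y
            rw [act_sum_smul]
            refine Fintype.sum_equiv (Equiv.subRight a) _ _ ?_
            intro m'
            show n (m' - a) • act (DihedralGroup.r m') y
              = n (m' - a) • act (DihedralGroup.r a) (act (DihedralGroup.r (m' - a)) y)
            have hpr : act (DihedralGroup.r a) (act (DihedralGroup.r (m' - a)) y)
                = act (DihedralGroup.r m') y := by
              rw [← act_mul, DihedralGroup.r_mul_r]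
              congr 2
              ring
            rw [hpr]
          have hφrot : ∀ (a : ZMod r) (x : V₁),
              φ₀ (act (DihedralGroup.r a) x) = act (DihedralGroup.r a) (φ₀ x) := by
            intro a x
            have h1 : F (fun m => (hrange x).choose (m - a)) = act (DihedralGroup.r a) x := by
              show (∑ m : ZMod r, (hrange x).choose (m - a) • act (DihedralGroup.r m) v.1)
                = act (DihedralGroup.r a) x
              rw [hshift a _ v.1]
              exact congrArg (act (DihedralGroup.r a)) (hrange x).choose_spec
            calc φ₀ (act (DihedralGroup.r a) x)
                = FW (fun m => (hrange x).choose (m - a)) := hφeq _ _ h1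
              _ = act (DihedralGroup.r a) (FW (hrange x).choose) := hshift a _ (e.symm v.2)
              _ = act (DihedralGroup.r a) (φ₀ x) := rfl
          have hneg2 : ∀ (n : ZMod r → ℤ) (y : V₁), act (DihedralGroup.sr i) y = y →
              (∑ m : ZMod r, n (-m) • act (DihedralGroup.r m) y)
              = act (DihedralGroup.sr i) (∑ m : ZMod r, n m • act (DihedralGroup.r m) y) := by
            intro n y hy
            rw [act_sum_smul]
            refine Fintype.sum_equiv (Equiv.neg (ZMod r)) _ _ ?_
            intro m
            show n (-m) • act (DihedralGroup.r m) y
              = n (-m) • act (DihedralGroup.sr i) (act (DihedralGroup.r (-m)) y)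
            have hpr : act (DihedralGroup.sr i) (act (DihedralGroup.r (-m)) y)
                = act (DihedralGroup.r m) y := by
              rw [← act_mul]
              have hpr2 : DihedralGroup.sr i * DihedralGroup.r (-m) =
                  DihedralGroup.r m * DihedralGroup.sr i := by
                rw [DihedralGroup.sr_mul_r, DihedralGroup.r_mul_sr]
                congr 1
                ring
              rw [hpr2, act_mul, hy]
            rw [hpr]
          have hφσ : ∀ x : V₁,
              φ₀ (act (DihedralGroup.sr i) x) = act (DihedralGroup.sr i) (φ₀ x) := by
            intro x
            have h1 : F (fun m => (hrange x).choose (-m)) = act (DihedralGroup.sr i) x := by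
              show (∑ m : ZMod r, (hrange x).choose (-m) • act (DihedralGroup.r m) v.1)
                = act (DihedralGroup.sr i) x
              rw [hneg2 _ v.1 hfix1]
              exact congrArg (act (DihedralGroup.sr i)) (hrange x).choose_spec
            calc φ₀ (act (DihedralGroup.sr i) x)
                = FW (fun m => (hrange x).choose (-m)) := hφeq _ _ h1
              _ = act (DihedralGroup.sr i) (FW (hrange x).choose) :=
                  hneg2 _ (e.symm v.2) hfixw
              _ = act (DihedralGroup.sr i) (φ₀ x) := rfl
          have hφcomm : ∀ g (x : V₁), φ₀ (act g x) = act g (φ₀ x) := by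
            rintro (a | a) x
            · exact hφrot a x
            · have hdec : DihedralGroup.sr a = DihedralGroup.sr i * DihedralGroup.r (a - i) := by
                rw [DihedralGroup.sr_mul_r]
                congr 1
                ring
              rw [hdec, act_mul, hφσ, hφrot, act_mul]
          -- the graph of the intertwiner
          set Mg : AddSubgroup (V₁ × V₂) :=
            { carrier := {q : V₁ × V₂ | q.2 = e (φ₀ q.1)}
              zero_mem' := by
                show (0 : V₂) = e (φ₀ 0)
                rw [hφzero, map_zero]
              add_mem' := by
                intro q q' hq hq'
                show (q + q').2 = e (φ₀ (q + q').1)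
                have h1 : (q + q').1 = q.1 + q'.1 := rfl
                have h2 : (q + q').2 = q.2 + q'.2 := rfl
                rw [h1, h2, hφadd, map_add,
                  show q.2 = e (φ₀ q.1) from hq, show q'.2 = e (φ₀ q'.1) from hq']
              neg_mem' := by
                intro q hq
                show (-q).2 = e (φ₀ (-q).1)
                have h1 : (-q).1 = -q.1 := rfl
                have h2 : (-q).2 = -q.2 := rfl
                rw [h1, h2, hφneg, map_neg, show q.2 = e (φ₀ q.1) from hq] } with hMg
          have hmemMg : ∀ q : V₁ × V₂, q ∈ Mg ↔ q.2 = e (φ₀ q.1) := fun q => Iff.rfl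
          refine ⟨Mg, ?_, ?_, ?_, ?_⟩
          · intro g q hq
            rw [hmemMg] at hq
            rw [hmemMg]
            have h0 := hcomp g q.1 q.2
            rw [Prod.mk.eta] at h0
            rw [h0]
            show act₂ g q.2 = e (φ₀ (act g q.1))
            rw [hq, ← hinter, hφcomm]
          · intro htop
            obtain ⟨y₀, hy₀⟩ := exists_ne (0 : V₂)
            have hmem : (((0:V₁), y₀) : V₁ × V₂) ∈ Mg := by
              rw [htop]
              trivial
            rw [hmemMg] at hmem
            have : y₀ = e (φ₀ 0) := hmem
            rw [hφzero, map_zero] at this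
            exact hy₀ this
          · rw [hmemMg]
            show v.2 = e (φ₀ v.1)
            rw [hφv, AddEquiv.apply_symm_apply]
          · rw [hmemMg, hγ0]
            show (0 : V₂) = e (φ₀ 0)
            rw [hφzero, map_zero]
    · -- Case II : the rotation acts trivially
      have hrotδ : ∀ x : V₁, act (DihedralGroup.r δ) x = x := by
        intro x
        have : x ∈ Wc := by rw [hWtop]; trivial
        exact this
      obtain ⟨n₀, hn₀⟩ := hδgen
      have hrotnegδ : ∀ x : V₁, act (DihedralGroup.r (-δ)) x = x := by
        intro x
        conv_lhs => rw [← hrotδ x]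
        rw [← act_mul, DihedralGroup.r_mul_r, neg_add_cancel, ← DihedralGroup.one_def, act_one]
      have hrotz : ∀ (k : ℤ) (x : V₁), act (DihedralGroup.r (k • δ)) x = x := by
        intro k
        induction k using Int.induction_on with
        | zero => intro x; rw [zero_zsmul, ← DihedralGroup.one_def, act_one]
        | succ n ih =>
            intro x
            have hstep : ((n : ℤ) + 1) • δ = (n : ℤ) • δ + δ := by
              rw [add_zsmul, one_zsmul]
            rw [hstep, ← DihedralGroup.r_mul_r, act_mul, hrotδ, ih]
        | pred n ih =>
            intro x
            have hstep : (-(n : ℤ) - 1) • δ = (-(n : ℤ)) • δ + -δ := by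
              rw [show (-(n:ℤ) - 1) = (-(n:ℤ)) + (-1) from by ring, add_zsmul, neg_one_zsmul]
            rw [hstep, ← DihedralGroup.r_mul_r, act_mul, hrotnegδ, ih]
      have hrot : ∀ (m : ZMod r) (x : V₁), act (DihedralGroup.r m) x = x := by
        intro m x
        have hm : ((m.val : ℤ) * n₀) • δ = m := by
          rw [mul_smul, hn₀]
          rw [zsmul_eq_mul, mul_one]
          push_cast
          rw [ZMod.natCast_val, ZMod.cast_id]
        rw [← hm]
        exact hrotz _ x
      have hreflact : ∀ (a : ZMod r) (x : V₁),
          act (DihedralGroup.sr a) x = act (DihedralGroup.sr i) x := by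
        intro a x
        have hprod : DihedralGroup.sr i * DihedralGroup.r (a - i) = DihedralGroup.sr a := by
          rw [DihedralGroup.sr_mul_r]
          congr 1
          ring
        rw [← hprod, act_mul, hrot]
      set Wσ : AddSubgroup V₁ :=
        { carrier := {x | act (DihedralGroup.sr i) x = x}
          zero_mem' := act_zero _
          add_mem' := by
            intro a b ha hb
            show act _ (a + b) = a + b
            rw [act_add, show act (DihedralGroup.sr i) a = a from ha,
              show act (DihedralGroup.sr i) b = b from hb]
          neg_mem' := by
            intro a ha
            show act _ (-a) = -a
            rw [act_neg, show act (DihedralGroup.sr i) a = a from ha] } with hWσdef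
      have hWσmem : ∀ x : V₁, x ∈ Wσ ↔ act (DihedralGroup.sr i) x = x := fun x => Iff.rfl
      have hWσinv : ∀ g, ∀ x ∈ Wσ, (ψ g (x, (0:V₂))).1 ∈ Wσ := by
        rintro (a | a) x hx <;> rw [hWσmem] at hx <;> rw [hWσmem]
        · show act (DihedralGroup.sr i) (act (DihedralGroup.r a) x) = act (DihedralGroup.r a) x
          rw [hrot]
          exact hx
        · show act (DihedralGroup.sr i) (act (DihedralGroup.sr a) x) = act (DihedralGroup.sr a) x
          rw [hreflact a x, hx]
          exact hx
      rcases hirr₁ Wσ hWσinv with hσbot | hσtop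
      · exfalso
        have hv12 : ψ (DihedralGroup.sr i) (v.1, v.2) = (v.1, v.2) := by
          rw [Prod.mk.eta]
          exact hvfix
        rw [hcomp] at hv12
        injection hv12 with hv1 hv2
        have hv10 : v.1 = 0 := by
          have : v.1 ∈ Wσ := hv1
          rwa [hσbot, AddSubgroup.mem_bot] at this
        have hv20 : v.2 = 0 := by
          have h6 : act (DihedralGroup.sr i) (e.symm v.2) = e.symm v.2 := by
            rw [hinter', hv2]
          have h7 : e.symm v.2 ∈ Wσ := h6
          rw [hσbot, AddSubgroup.mem_bot] at h7
          have := congrArg e h7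
          rwa [AddEquiv.apply_symm_apply, map_zero] at this
        exact hvne (by rw [← Prod.mk.eta (p := v), hv10, hv20]; rfl)
      · have hσ1 : ∀ x : V₁, act (DihedralGroup.sr i) x = x := by
          intro x
          have : x ∈ Wσ := by rw [hσtop]; trivial
          exact this
        have hact1 : ∀ g (x : V₁), act g x = x := by
          rintro (a | a) x
          · exact hrot a x
          · rw [hreflact]
            exact hσ1 x
        have hact21 : ∀ g (y : V₂), act₂ g y = y := by
          intro g y
          have h0 := hinter g (e.symm y)
          rw [hact1, AddEquiv.apply_symm_apply] at h0
          exact h0.symm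
        have hψ1 : ∀ g (q : V₁ × V₂), ψ g q = q := by
          intro g q
          have h0 := hcomp g q.1 q.2
          rw [Prod.mk.eta] at h0
          rw [h0, hact1, hact21]
        have h2w : w + w = 0 := by
          have := hwrel
          rwa [hψ1] at this
        have hpw : p • w = 0 := by
          have h0 : p • w = (p • w.1, p • w.2) := rfl
          rw [h0, hV₁, hV₂]
          rfl
        obtain ⟨kp, hkp⟩ := hp
        have hw0 : w = 0 := by
          have h4 : (2 * kp) • w = 0 := by
            rw [mul_nsmul, two_nsmul, h2w, smul_zero]
          rw [hkp, add_nsmul, one_nsmul, h4, zero_add] at hpw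
          exact hpw
        have hmu : m_vec = u := by
          rw [hm_vec, hw0, map_zero, add_zero]
        have hγu : γ = r • u := by
          rw [hγ]
          rw [Finset.sum_congr rfl fun k _ => hψ1 ((DihedralGroup.r δ) ^ k) m_vec]
          rw [Finset.sum_const, Finset.card_range, hmu]
        have hvu : v = u + u := by
          rw [hv, hψ1]
        letI : Module (ZMod p) V₁ := AddCommGroup.zmodModule hV₁
        letI : Module (ZMod p) V₂ := AddCommGroup.zmodModule hV₂
        refine ⟨(Submodule.span (ZMod p) {u}).toAddSubgroup, ?_, ?_, ?_, ?_⟩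
        · intro g x hx
          rw [hψ1]
          exact hx
        · intro htop
          obtain ⟨x₀, hx₀⟩ := exists_ne (0 : V₁)
          obtain ⟨y₀, hy₀⟩ := exists_ne (0 : V₂)
          have hxm : ((x₀, (0:V₂)) : V₁ × V₂) ∈ (Submodule.span (ZMod p) {u}).toAddSubgroup := by
            rw [htop]; trivial
          have hym : (((0:V₁), y₀) : V₁ × V₂) ∈ (Submodule.span (ZMod p) {u}).toAddSubgroup := by
            rw [htop]; trivial
          rw [Submodule.mem_toAddSubgroup, Submodule.mem_span_singleton] at hxm hym
          obtain ⟨a, ha⟩ := hxm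
          obtain ⟨b, hb⟩ := hym
          have ha1 : a • u.1 = x₀ := by
            have := congrArg Prod.fst ha
            simpa using this
          have ha2 : a • u.2 = 0 := by
            have := congrArg Prod.snd ha
            simpa using this
          have hb2 : b • u.2 = y₀ := by
            have := congrArg Prod.snd hb
            simpa using this
          have hane : a ≠ 0 := by
            intro h0
            rw [h0, zero_smul] at ha1
            exact hx₀ ha1.symm
          have hu2 : u.2 = 0 := by
            have := congrArg (fun q => a⁻¹ • q) ha2
            simpa [inv_smul_smul₀ hane] using this
          rw [hu2, smul_zero] at hb2
          exact hy₀ hb2.symm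
        · rw [hvu]
          exact add_mem (Submodule.mem_span_singleton_self u) (Submodule.mem_span_singleton_self u)
        · rw [hγu]
          exact nsmul_mem (Submodule.mem_span_singleton_self u) r
  have := final_contradiction hr ψ ρ τ hgen hd1 hd2 hδgen M hMinv
    (by rw [eq1]; exact hMv) hτ2eq (by rw [eq2]; exact hMγ)
  exact hMne this
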